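/- For all integers q ≥ 2 and n ≥ 1, the family 𝓖_q is n-cell implementable under scenario (◦∗) if and only if q ≤ n + 1. -/

import Mathlib

/-- The alphabet 𝔹• = {0, 1, ∗, •}. -/
inductive BB : Type
  | zero
  | one
  | star
  | reject
deriving DecidableEq

instance : Fintype BB :=
  ⟨{BB.zero, BB.one, BB.star, BB.reject}, fun x => by cases x <;> simp⟩

/-- The cell function T : 𝔹• × 𝔹• → 𝔹: T(u,ϑ) = 1 iff u = ∗, or ϑ = ∗,
or u,ϑ ∈ 𝔹 with u = ϑ. -/
def Tcell : BB → BB → Bool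
  | BB.star, _ => true
  | _, BB.star => true
  | BB.zero, BB.zero => true
  | BB.one, BB.one => true
  | _, _ => false

/-- The word-level function T(u,ϑ) = ⋀_{j<n} T(u_j, ϑ_j). -/
def Tword {n : ℕ} (u θ : Fin n → BB) : Bool :=
  decide (∀ j, Tcell (u j) (θ j) = true)

/-- The alphabet 𝔹 = {0,1} ⊆ 𝔹•. -/
def Bcirc : Set BB := {BB.zero, BB.one}

/-- The alphabet 𝔹∗ = {0,1,∗} ⊆ 𝔹•. -/
def Bstar : Set BB := {BB.zero, BB.one, BB.star}

/-- The full alphabet 𝔹•. -/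
def Bdot : Set BB := Set.univ

/-- A family Φ of functions {0,…,q−1} → 𝔹 is n-cell implementable under
scenario (A,B) if there are mappings u : {0,…,q−1} → A^n and ϑ : Φ → B^n
with f(x) = T(u(x), ϑ(f)) for all f ∈ Φ and x. -/
def Implementable (A B : Set BB) (n q : ℕ) (Φ : Set (Fin q → Bool)) : Prop :=
  ∃ u : Fin q → Fin n → BB, ∃ θ : (Fin q → Bool) → Fin n → BB,
    (∀ x j, u x j ∈ A) ∧ (∀ f ∈ Φ, ∀ j, θ f j ∈ B) ∧
    (∀ f ∈ Φ, ∀ x, f x = Tword (u x) (θ f))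

/-- The family 𝓔_q = { x ↦ [x = t] : t ∈ [q⟩ }. -/
def Eset (q : ℕ) : Set (Fin q → Bool) :=
  { f | ∃ t : Fin q, f = fun x => decide (x = t) }

/-- The family 𝓝_q = { x ↦ [x ≠ t] : t ∈ [q⟩ }. -/
def Nset (q : ℕ) : Set (Fin q → Bool) :=
  { f | ∃ t : Fin q, f = fun x => decide (x ≠ t) }

/-- The family 𝓖_q = { x ↦ [x ≥ t] : t ∈ [q⟩ }. -/
def Gset (q : ℕ) : Set (Fin q → Bool) :=
  { f | ∃ t : Fin q, f = fun x => decide (t ≤ x) }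

/-- The family 𝓛_q = { x ↦ [x ≤ t] : t ∈ [q⟩ }. -/
def Lset (q : ℕ) : Set (Fin q → Bool) :=
  { f | ∃ t : Fin q, f = fun x => decide (x ≤ t) }

lemma tcell_true_false {a b c : BB} (ha : a ∈ Bcirc) (hc : c ∈ Bcirc)
    (h1 : Tcell a b = true) (h2 : Tcell c b = false) : b = a := by
  simp only [Bcirc, Set.mem_insert_iff, Set.mem_singleton_iff] at ha hc
  rcases ha with rfl | rfl <;> rcases hc with rfl | rfl <;> cases b <;>
    simp_all [Tcell]

theorem Gset_implementable_circStar (q n : ℕ) (hq : 2 ≤ q) (hn : 1 ≤ n) :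
    Implementable Bcirc Bstar n q (Gset q) ↔ q ≤ n + 1 := by
  classical
  constructor
  · rintro ⟨u, θ, hA, hB, himpl⟩
    -- thresholds and functions
    set t : Fin (q - 1) → Fin q := fun i => ⟨i.val + 1, by omega⟩ with ht
    set s : Fin (q - 1) → Fin q := fun i => ⟨i.val, by omega⟩ with hs
    set F : Fin (q - 1) → (Fin q → Bool) := fun i => fun x => decide (t i ≤ x) with hF
    have hmem : ∀ i, F i ∈ Gset q := fun i => ⟨t i, rfl⟩
    have htrue : ∀ i x, t i ≤ x → ∀ j, Tcell (u x j) (θ (F i) j) = true := by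
      intro i x hx j
      have h := himpl (F i) (hmem i) x
      have hFx : F i x = true := by simp [hF, hx]
      rw [hFx] at h
      have := of_decide_eq_true h.symm
      exact this j
    have hex : ∀ i, ∃ j, Tcell (u (s i) j) (θ (F i) j) = false := by
      intro i
      have h := himpl (F i) (hmem i) (s i)
      have hFx : F i (s i) = false := by
        simp only [hF, decide_eq_false_iff_not]
        intro hle
        rw [Fin.le_def] at hle
        simp [ht, hs] at hle
      rw [hFx] at h
      have := of_decide_eq_false h.symm
      push_neg at this
      obtain ⟨j, hj⟩ := this
      exact ⟨j, by simpa using hj⟩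
    set J : Fin (q - 1) → Fin n := fun i => (hex i).choose with hJ
    have hJspec : ∀ i, Tcell (u (s i) (J i)) (θ (F i) (J i)) = false :=
      fun i => (hex i).choose_spec
    -- key: from a false at s i and trues at x ≥ t i, θ (F i) (J i) = u x (J i)
    have hkey : ∀ i x, t i ≤ x → θ (F i) (J i) = u x (J i) := by
      intro i x hx
      exact tcell_true_false (hA x (J i)) (hA (s i) (J i))
        (htrue i x hx (J i)) (hJspec i)
    have hinj : Function.Injective J := by
      intro i i' hJeq
      by_contra hne
      rcases Nat.lt_or_ge i.val i'.val with hlt | hge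
      · -- i < i'
        have h1 : θ (F i) (J i) = u (s i') (J i) := by
          apply hkey i (s i')
          rw [Fin.le_def]; simp [ht, hs]; omega
        have h2 : θ (F i) (J i) = u (t i') (J i) := by
          apply hkey i (t i')
          rw [Fin.le_def]; simp [ht]; omega
        have h3 : u (s i') (J i) = u (t i') (J i) := h1 ▸ h2
        have h4 : Tcell (u (t i') (J i')) (θ (F i') (J i')) = true :=
          htrue i' (t i') le_rfl (J i')
        have h5 := hJspec i'
        rw [← hJeq] at h4 h5
        rw [← h3] at h4
        rw [h4] at h5
        exact absurd h5 (by simp)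
      · have hlt : i'.val < i.val := by
          rcases Nat.lt_or_ge i'.val i.val with h | h
          · exact h
          · exact absurd (Fin.ext (le_antisymm h hge)) hne
        have h1 : θ (F i') (J i') = u (s i) (J i') := by
          apply hkey i' (s i)
          rw [Fin.le_def]; simp [ht, hs]; omega
        have h2 : θ (F i') (J i') = u (t i) (J i') := by
          apply hkey i' (t i)
          rw [Fin.le_def]; simp [ht]; omega
        have h3 : u (s i) (J i') = u (t i) (J i') := h1 ▸ h2
        have h4 : Tcell (u (t i) (J i)) (θ (F i) (J i)) = true :=
          htrue i (t i) le_rfl (J i)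
        have h5 := hJspec i
        rw [hJeq] at h4 h5
        rw [← h3] at h4
        rw [h4] at h5
        exact absurd h5 (by simp)
    have := Fintype.card_le_of_injective J hinj
    simp at this
    omega
  · intro hqn
    refine ⟨fun x j => if j.val < x.val then BB.one else BB.zero,
      fun f => if h : f ∈ Gset q then
        (fun j => if j.val + 1 =
          (Exists.choose (h : ∃ t : Fin q, f = fun x => decide (t ≤ x))).val
          then BB.one else BB.star)
      else fun _ => BB.star, ?_, ?_, ?_⟩
    · intro x j
      by_cases h : j.val < x.val <;> simp [h, Bcirc]
    · intro f hf j
      simp only [dif_pos hf]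
      by_cases h : j.val + 1 =
          (Exists.choose (hf : ∃ t : Fin q, f = fun x => decide (t ≤ x))).val <;>
        simp [h, Bstar]
    · intro f hf x
      simp only [dif_pos hf]
      set t := Exists.choose (hf : ∃ t : Fin q, f = fun x => decide (t ≤ x)) with htdef
      have hspec : f = fun x => decide (t ≤ x) :=
        Exists.choose_spec (hf : ∃ t : Fin q, f = fun x => decide (t ≤ x))
      rw [hspec]
      simp only [Tword]
      by_cases hle : t ≤ x
      · have : ∀ j : Fin n,
            Tcell (if j.val < x.val then BB.one else BB.zero)
              (if j.val + 1 = t.val then BB.one else BB.star) = true := by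
          intro j
          by_cases hj : j.val + 1 = t.val
          · have hjx : j.val < x.val := by
              rw [Fin.le_def] at hle; omega
            simp [hj, hjx, Tcell]
          · by_cases hjx : j.val < x.val <;> simp [hj, hjx, Tcell]
        simp [hle, this]
      · have hxt : x.val < t.val := by rw [Fin.le_def] at hle; omega
        have ht1 : 1 ≤ t.val := by omega
        have htn : t.val - 1 < n := by have := t.isLt; omega
        have : ¬ (∀ j : Fin n,
            Tcell (if j.val < x.val then BB.one else BB.zero)
              (if j.val + 1 = t.val then BB.one else BB.star) = true) := by
          intro hall
          have := hall ⟨t.val - 1, htn⟩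
          have hj1 : t.val - 1 + 1 = t.val := by omega
          have hj2 : ¬ (t.val - 1 < x.val) := by omega
          simp [hj1, hj2, Tcell] at this
        simp [hle, this]
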